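/- Let S ⊆ ℕ^d be an affine semigroup (finitely generated submonoid) with minimal generating set A(S), and let v ∈ A(S). Then S \ {v} is a submonoid of ℕ^d generated by the set (A(S) \ {v}) ∪ {g + v : g ∈ A(S) \ {v}} ∪ {2v, 3v}. In particular S \ {v} is finitely generated. -/

import Mathlib

/-- The set of minimal generators (atoms) of a submonoid `S ⊆ ℕ^d`. -/
def atoms {d : ℕ} (S : Set (Fin d → ℕ)) : Set (Fin d → ℕ) :=
  {x ∈ S | x ≠ 0 ∧ ¬ ∃ a b : Fin d → ℕ, a ∈ S ∧ a ≠ 0 ∧ b ∈ S ∧ b ≠ 0 ∧ x = a + b}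

theorem stmt1 {d : ℕ} (S : Set (Fin d → ℕ))
    (h0 : (0 : Fin d → ℕ) ∈ S) (hadd : ∀ a ∈ S, ∀ b ∈ S, a + b ∈ S)
    (hfg : (atoms S).Finite)
    (hgen : (AddSubmonoid.closure (atoms S) : Set (Fin d → ℕ)) = S)
    (v : Fin d → ℕ) (hv : v ∈ atoms S) :
    (0 : Fin d → ℕ) ∈ S \ {v} ∧ (∀ a ∈ S \ {v}, ∀ b ∈ S \ {v}, a + b ∈ S \ {v}) ∧
    (AddSubmonoid.closure
        ((atoms S \ {v}) ∪ ((fun g => g + v) '' (atoms S \ {v})) ∪ {2 • v, 3 • v}) :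
      Set (Fin d → ℕ)) = S \ {v} ∧
    ((atoms S \ {v}) ∪ ((fun g => g + v) '' (atoms S \ {v})) ∪ {2 • v, 3 • v}).Finite := by
  obtain ⟨hvS, hv0, hvirr⟩ := hv
  set T : Set (Fin d → ℕ) :=
    (atoms S \ {v}) ∪ ((fun g => g + v) '' (atoms S \ {v})) ∪ {2 • v, 3 • v} with hT
  have h2 : (2 : ℕ) • v = v + v := two_nsmul v
  have h3 : (3 : ℕ) • v = v + v + v := by
    rw [show (3 : ℕ) = 2 + 1 from rfl, add_nsmul, two_nsmul, one_nsmul]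
  have hz : (0 : Fin d → ℕ) ∈ S \ {v} := ⟨h0, fun h => hv0 (by simpa using h.symm)⟩
  have hcl : ∀ a ∈ S \ {v}, ∀ b ∈ S \ {v}, a + b ∈ S \ {v} := by
    rintro a ⟨haS, hav⟩ b ⟨hbS, hbv⟩
    refine ⟨hadd a haS b hbS, ?_⟩
    intro h
    rw [Set.mem_singleton_iff] at h
    rcases eq_or_ne a 0 with ha0 | ha0
    · subst ha0; exact hbv (by simpa using h)
    rcases eq_or_ne b 0 with hb0 | hb0
    · subst hb0; exact hav (by simpa using h)
    exact hvirr ⟨a, b, haS, ha0, hbS, hb0, h.symm⟩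
  -- the submonoid S \ {v}
  let M : AddSubmonoid (Fin d → ℕ) :=
    { carrier := S \ {v}
      zero_mem' := hz
      add_mem' := fun {a b} ha hb => hcl a ha b hb }
  have hTM : T ⊆ S \ {v} := by
    intro x hx
    simp only [hT, Set.mem_union, Set.mem_image, Set.mem_diff, Set.mem_insert_iff,
      Set.mem_singleton_iff] at hx
    rcases hx with (⟨⟨hxS, hx0, -⟩, hxv⟩ | ⟨g, ⟨⟨hgS, hg0, -⟩, -⟩, rfl⟩) | (rfl | rfl)
    · exact ⟨hxS, hxv⟩
    · refine ⟨hadd g hgS v hvS, fun h => hg0 ?_⟩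
      rw [Set.mem_singleton_iff] at h
      have : g + v = 0 + v := by simpa using h
      exact add_right_cancel this
    · refine ⟨by rw [h2]; exact hadd v hvS v hvS, fun h => hv0 ?_⟩
      rw [Set.mem_singleton_iff, h2] at h
      have : v + v = 0 + v := by simpa using h
      exact add_right_cancel this
    · refine ⟨by rw [h3]; exact hadd _ (hadd v hvS v hvS) v hvS, fun h => hv0 ?_⟩
      rw [Set.mem_singleton_iff, h3] at h
      have h' : v + v + v = 0 + v := by simpa using h
      have h'' : v + v = 0 := add_right_cancel h'
      funext i
      have hi := congrFun h'' i
      simp only [Pi.add_apply, Pi.zero_apply] at hi ⊢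
      omega
  have h2T : (2 : ℕ) • v ∈ AddSubmonoid.closure T :=
    AddSubmonoid.subset_closure (Or.inr (Or.inl rfl))
  have h3T : (3 : ℕ) • v ∈ AddSubmonoid.closure T :=
    AddSubmonoid.subset_closure (Or.inr (Or.inr rfl))
  -- key induction
  have key : ∀ x ∈ AddSubmonoid.closure (atoms S),
      x = 0 ∨ x = v ∨ (x ∈ AddSubmonoid.closure T ∧ x + v ∈ AddSubmonoid.closure T) := by
    intro x hx
    induction hx using AddSubmonoid.closure_induction with
    | mem g hg =>
      rcases eq_or_ne g v with rfl | hgv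
      · exact Or.inr (Or.inl rfl)
      · refine Or.inr (Or.inr ⟨?_, ?_⟩)
        · exact AddSubmonoid.subset_closure (Or.inl (Or.inl ⟨hg, hgv⟩))
        · exact AddSubmonoid.subset_closure (Or.inl (Or.inr ⟨g, ⟨hg, hgv⟩, rfl⟩))
    | zero => exact Or.inl rfl
    | add a b ha hb iha ihb =>
      rcases iha with rfl | hav | ⟨ha1, ha2⟩
      · simpa using ihb
      · rw [hav]
        rcases ihb with rfl | hbv | ⟨hb1, hb2⟩
        · exact Or.inr (Or.inl (by simp))
        · rw [hbv]
          exact Or.inr (Or.inr ⟨by rwa [← h2],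
            by rw [show v + v + v = 3 • v from h3.symm]; exact h3T⟩)
        · refine Or.inr (Or.inr ⟨by rwa [add_comm], ?_⟩)
          have he : v + b + v = b + 2 • v := by rw [h2]; ring
          rw [he]
          exact AddSubmonoid.add_mem _ hb1 h2T
      · rcases ihb with rfl | hbv | ⟨hb1, hb2⟩
        · simpa using Or.inr (Or.inr ⟨ha1, ha2⟩)
        · rw [hbv]
          exact Or.inr (Or.inr ⟨ha2,
            by rw [add_assoc, ← h2]; exact AddSubmonoid.add_mem _ ha1 h2T⟩)
        · refine Or.inr (Or.inr ⟨AddSubmonoid.add_mem _ ha1 hb1, ?_⟩)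
          rw [add_assoc]
          exact AddSubmonoid.add_mem _ ha1 hb2
  refine ⟨hz, hcl, ?_, ?_⟩
  · apply Set.Subset.antisymm
    · intro x hx
      exact AddSubmonoid.closure_le.mpr (show T ⊆ (M : Set _) from hTM) hx
    · rintro x ⟨hxS, hxv⟩
      rw [Set.mem_singleton_iff] at hxv
      have hx' : x ∈ AddSubmonoid.closure (atoms S) := by rw [← hgen] at hxS; exact hxS
      rcases key x hx' with rfl | rfl | ⟨h1, -⟩
      · exact AddSubmonoid.zero_mem _
      · exact absurd rfl hxv
      · exact h1
  · exact ((hfg.diff).union ((hfg.diff).image _)).union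
      ((Set.finite_singleton _).insert _)
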